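/- Define 𝒦_ν(z) = 2^{ν-1} ∫₀^∞ t^{ν-1} exp(-z t - z/(4t)) dt for z > 0. Then 𝒦_ν satisfies the modified Bessel differential equation z² 𝒦_ν''(z) + z 𝒦_ν'(z) - (z² + ν²) 𝒦_ν(z) = 0. -/

import Mathlib

open MeasureTheory Real Set Filter Topology

/-- Modified Bessel function of the second kind, via its integral representation. -/
noncomputable def besselK (ν z : ℝ) : ℝ :=
  2 ^ (ν - 1) * ∫ t in Set.Ioi (0:ℝ), t ^ (ν - 1) * Real.exp (-z * t - z / (4 * t))

/-- Lognormal density with parameters m (log-mean) and v (log-variance). -/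
noncomputable def lognormalPdf (m v x : ℝ) : ℝ :=
  (1 / (Real.sqrt (2 * π * v) * x)) * Real.exp (-(Real.log x - m) ^ 2 / (2 * v))

namespace BesselODE

/-- Elementary bound `x^k e^{-cx} ≤ k!/c^k`. -/
lemma pow_mul_exp_le (k : ℕ) {c x : ℝ} (hc : 0 < c) (hx : 0 ≤ x) :
    x ^ k * Real.exp (-(c * x)) ≤ k.factorial / c ^ k := by
  have h1 : (c * x) ^ k / k.factorial ≤ Real.exp (c * x) := by
    calc (c * x) ^ k / k.factorial
        ≤ ∑ i ∈ Finset.range (k + 1), (c * x) ^ i / i.factorial := by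
          refine Finset.single_le_sum (f := fun i => (c * x) ^ i / i.factorial)
            (fun i _ => by positivity) (Finset.self_mem_range_succ k)
      _ ≤ Real.exp (c * x) := Real.sum_le_exp_of_nonneg (by positivity) _
  have h2 : (c * x) ^ k ≤ k.factorial * Real.exp (c * x) := by
    rw [div_le_iff₀ (by positivity)] at h1; linarith
  have hcx : (0:ℝ) < c ^ k := by positivity
  have hx' : x ^ k = (c * x) ^ k / c ^ k := by
    rw [mul_pow]; field_simp
  rw [hx']
  rw [div_mul_eq_mul_div, div_le_div_iff₀ (by positivity) (by positivity)]
  calc (c * x) ^ k * Real.exp (-(c * x)) * c ^ k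
      ≤ (k.factorial * Real.exp (c * x)) * Real.exp (-(c * x)) * c ^ k := by
        have he : (0:ℝ) < Real.exp (-(c*x)) := Real.exp_pos _
        gcongr
    _ = (k.factorial : ℝ) * c ^ k := by
        rw [mul_assoc ((k.factorial : ℝ)), ← Real.exp_add]; simp
    _ = (k.factorial : ℝ) * c ^ k := rfl

/-- Uniform bound for the kernel. -/
lemma bound_aux (p : ℝ) {c : ℝ} (hc : 0 < c) :
    ∃ C : ℝ, 0 ≤ C ∧ ∀ t ∈ Ioi (0:ℝ), t ^ p * Real.exp (-c * t - c / (4 * t)) ≤ C := by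
  set k : ℕ := ⌈|p|⌉₊ with hk
  have hpk : p ≤ (k : ℝ) := (le_abs_self p).trans (Nat.le_ceil _)
  have hkp : -(k : ℝ) ≤ p := by
    have := (neg_abs_le p); have h2 : |p| ≤ (k:ℝ) := Nat.le_ceil _; linarith
  refine ⟨max (k.factorial / c ^ k) (k.factorial / (c/4) ^ k), le_max_of_le_left (by positivity),
    fun t ht => ?_⟩
  have ht0 : (0:ℝ) < t := ht
  rcases le_or_gt 1 t with h1 | h1
  · refine le_max_of_le_left ?_
    calc t ^ p * Real.exp (-c * t - c / (4 * t))
        ≤ t ^ k * Real.exp (-(c * t)) := by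
          apply mul_le_mul
          · rw [← Real.rpow_natCast t k]
            exact Real.rpow_le_rpow_of_exponent_le h1 hpk
          · apply Real.exp_le_exp.2
            have : 0 ≤ c / (4 * t) := by positivity
            linarith
          · positivity
          · positivity
      _ ≤ k.factorial / c ^ k := pow_mul_exp_le k hc ht0.le
  · refine le_max_of_le_right ?_
    have hti : (0:ℝ) ≤ t⁻¹ := by positivity
    calc t ^ p * Real.exp (-c * t - c / (4 * t))
        ≤ t⁻¹ ^ k * Real.exp (-((c/4) * t⁻¹)) := by
          apply mul_le_mul
          · have : t ^ p ≤ t ^ (-(k:ℝ)) :=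
              Real.rpow_le_rpow_of_exponent_ge ht0 h1.le hkp
            calc t ^ p ≤ t ^ (-(k:ℝ)) := this
              _ = t⁻¹ ^ k := by
                  rw [Real.rpow_neg ht0.le, Real.rpow_natCast, inv_pow]
          · apply Real.exp_le_exp.2
            have h2 : (c/4) * t⁻¹ = c / (4 * t) := by field_simp
            have : 0 ≤ c * t := by positivity
            rw [h2]; linarith
          · positivity
          · positivity
      _ ≤ k.factorial / (c/4) ^ k := pow_mul_exp_le k (by positivity) hti

/-- Continuity of the generalized kernel on `Ioi 0`. -/
lemma contOn_aux (k : ℕ) (p c : ℝ) :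
    ContinuousOn (fun t : ℝ => (t + 1/(4*t)) ^ k * (t ^ p * Real.exp (-c * t - c / (4 * t))))
      (Ioi 0) := by
  intro t ht
  have ht0 : (0:ℝ) < t := ht
  apply ContinuousAt.continuousWithinAt
  have h4t : (4:ℝ) * t ≠ 0 := by positivity
  have h1 : ContinuousAt (fun t : ℝ => t ^ p) t :=
    Real.continuousAt_rpow_const t p (Or.inl ht0.ne')
  have h2 : ContinuousAt (fun t : ℝ => -c * t - c / (4 * t)) t := by
    apply ContinuousAt.sub
    · fun_prop
    · exact ContinuousAt.div continuousAt_const (by fun_prop) h4t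
  have h3 : ContinuousAt (fun t : ℝ => (t + 1/(4*t)) ^ k) t := by
    apply ContinuousAt.pow
    apply ContinuousAt.add continuousAt_id
    exact ContinuousAt.div continuousAt_const (by fun_prop) h4t
  exact h3.mul (h1.mul (Real.continuous_exp.continuousAt.comp h2))

lemma meas_aux (k : ℕ) (p c : ℝ) :
    AEStronglyMeasurable (fun t : ℝ => (t + 1/(4*t)) ^ k * (t ^ p * Real.exp (-c * t - c / (4 * t))))
      (volume.restrict (Ioi 0)) :=
  (contOn_aux k p c).aestronglyMeasurable measurableSet_Ioi

/-- Integrability of the generalized kernel. -/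
lemma integrable_aux (k : ℕ) (p : ℝ) {c : ℝ} (hc : 0 < c) :
    IntegrableOn (fun t : ℝ => (t + 1/(4*t)) ^ k * (t ^ p * Real.exp (-c * t - c / (4 * t))))
      (Ioi 0) := by
  obtain ⟨C, hC0, hC⟩ := bound_aux p (by positivity : (0:ℝ) < c/4)
  set D : ℝ := k.factorial / (c/4) ^ k with hD
  have hD0 : 0 ≤ D := by positivity
  apply Integrable.mono' (g := fun t => (D * C) * Real.exp (-(c/2) * t))
  · exact (exp_neg_integrableOn_Ioi 0 (by positivity)).const_mul _
  · exact meas_aux k p c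
  · rw [ae_restrict_iff' measurableSet_Ioi]
    refine ae_of_all _ fun t ht => ?_
    have ht0 : (0:ℝ) < t := ht
    have hs : (0:ℝ) ≤ t + 1/(4*t) := by positivity
    have hexpsplit : Real.exp (-c * t - c / (4 * t)) =
        Real.exp (-((c/4) * (t + 1/(4*t)))) * Real.exp (-(c/4) * t - (c/4) / (4 * t)) *
          Real.exp (-(c/2) * t - (c/2) / (4 * t)) := by
      rw [← Real.exp_add, ← Real.exp_add]
      congr 1
      field_simp
      ring
    have hnorm : ‖(t + 1/(4*t)) ^ k * (t ^ p * Real.exp (-c * t - c / (4 * t)))‖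
        = (t + 1/(4*t)) ^ k * (t ^ p * Real.exp (-c * t - c / (4 * t))) := by
      rw [Real.norm_eq_abs, abs_of_nonneg]
      have : (0:ℝ) < t ^ p := Real.rpow_pos_of_pos ht0 p
      positivity
    rw [hnorm, hexpsplit]
    have h1 : (t + 1/(4*t)) ^ k * Real.exp (-((c/4) * (t + 1/(4*t)))) ≤ D :=
      pow_mul_exp_le k (by positivity) hs
    have h2 : t ^ p * Real.exp (-(c/4) * t - (c/4) / (4 * t)) ≤ C := hC t ht
    have h3 : Real.exp (-(c/2) * t - (c/2) / (4 * t)) ≤ Real.exp (-(c/2) * t) := by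
      apply Real.exp_le_exp.2
      have : 0 ≤ (c/2) / (4 * t) := by positivity
      linarith
    calc (t + 1/(4*t)) ^ k *
          (t ^ p * (Real.exp (-((c/4) * (t + 1/(4*t)))) * Real.exp (-(c/4) * t - (c/4) / (4 * t)) *
            Real.exp (-(c/2) * t - (c/2) / (4 * t))))
        = ((t + 1/(4*t)) ^ k * Real.exp (-((c/4) * (t + 1/(4*t))))) *
            (t ^ p * Real.exp (-(c/4) * t - (c/4) / (4 * t))) *
            Real.exp (-(c/2) * t - (c/2) / (4 * t)) := by ring
      _ ≤ D * C * Real.exp (-(c/2) * t) := by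
          have hx : (0:ℝ) < t ^ p := Real.rpow_pos_of_pos ht0 p
          have e1 : (0:ℝ) ≤ Real.exp (-((c/4) * (t + 1/(4*t)))) := (Real.exp_pos _).le
          apply mul_le_mul _ h3 (Real.exp_pos _).le (by positivity)
          apply mul_le_mul h1 h2 (by positivity) hD0

/-- The kernel tends to `0` at `+∞`. -/
lemma tendsto_top_aux (p : ℝ) {c : ℝ} (hc : 0 < c) :
    Tendsto (fun t : ℝ => t ^ p * Real.exp (-c * t - c / (4 * t))) atTop (𝓝 0) := by
  obtain ⟨C, hC0, hC⟩ := bound_aux p (by positivity : (0:ℝ) < c/2)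
  have hg : Tendsto (fun t : ℝ => C * Real.exp (-((c/2) * t))) atTop (𝓝 0) := by
    have : Tendsto (fun t : ℝ => (c/2) * t) atTop atTop :=
      Tendsto.const_mul_atTop (by positivity) tendsto_id
    simpa using (Real.tendsto_exp_neg_atTop_nhds_zero.comp this).const_mul C
  apply tendsto_of_tendsto_of_tendsto_of_le_of_le' tendsto_const_nhds hg
  · filter_upwards [Ioi_mem_atTop (0:ℝ)] with t ht
    have : (0:ℝ) < t ^ p := Real.rpow_pos_of_pos ht p
    positivity
  · filter_upwards [Ioi_mem_atTop (0:ℝ)] with t ht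
    have ht0 : (0:ℝ) < t := ht
    have hsplit : Real.exp (-c * t - c / (4 * t)) =
        Real.exp (-(c/2) * t - (c/2) / (4 * t)) * Real.exp (-(c/2) * t - (c/2) / (4 * t)) := by
      rw [← Real.exp_add]; congr 1; field_simp; ring
    calc t ^ p * Real.exp (-c * t - c / (4 * t))
        = (t ^ p * Real.exp (-(c/2) * t - (c/2) / (4 * t))) *
            Real.exp (-(c/2) * t - (c/2) / (4 * t)) := by rw [hsplit]; ring
      _ ≤ C * Real.exp (-((c/2) * t)) := by
          apply mul_le_mul (hC t ht0)
          · apply Real.exp_le_exp.2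
            have : 0 ≤ (c/2) / (4 * t) := by positivity
            linarith [this]
          · exact (Real.exp_pos _).le
          · exact hC0

/-- The kernel tends to `0` at `0⁺`. -/
lemma tendsto_zero_aux (p : ℝ) {c : ℝ} (hc : 0 < c) :
    Tendsto (fun t : ℝ => t ^ p * Real.exp (-c * t - c / (4 * t))) (𝓝[>] 0) (𝓝 0) := by
  obtain ⟨C, hC0, hC⟩ := bound_aux p (by positivity : (0:ℝ) < c/2)
  have hg : Tendsto (fun t : ℝ => C * Real.exp (-((c/8) * t⁻¹))) (𝓝[>] (0:ℝ)) (𝓝 0) := by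
    have h1 : Tendsto (fun t : ℝ => (c/8) * t⁻¹) (𝓝[>] (0:ℝ)) atTop :=
      Tendsto.const_mul_atTop (by positivity) tendsto_inv_nhdsGT_zero
    have h2 : Tendsto (fun t : ℝ => -((c/8) * t⁻¹)) (𝓝[>] (0:ℝ)) atBot :=
      tendsto_neg_atTop_atBot.comp h1
    simpa using (Real.tendsto_exp_atBot.comp h2).const_mul C
  apply tendsto_of_tendsto_of_tendsto_of_le_of_le' tendsto_const_nhds hg
  · filter_upwards [self_mem_nhdsWithin] with t ht
    have ht0 : (0:ℝ) < t := ht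
    have : (0:ℝ) < t ^ p := Real.rpow_pos_of_pos ht0 p
    positivity
  · filter_upwards [self_mem_nhdsWithin] with t ht
    have ht0 : (0:ℝ) < t := ht
    have hsplit : Real.exp (-c * t - c / (4 * t)) =
        Real.exp (-(c/2) * t - (c/2) / (4 * t)) * Real.exp (-(c/2) * t - (c/2) / (4 * t)) := by
      rw [← Real.exp_add]; congr 1; ring
    calc t ^ p * Real.exp (-c * t - c / (4 * t))
        = (t ^ p * Real.exp (-(c/2) * t - (c/2) / (4 * t))) *
            Real.exp (-(c/2) * t - (c/2) / (4 * t)) := by rw [hsplit]; ring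
      _ ≤ C * Real.exp (-((c/8) * t⁻¹)) := by
          apply mul_le_mul (hC t ht0)
          · apply Real.exp_le_exp.2
            have h2 : (c/2) / (4 * t) = (c/8) * t⁻¹ := by
              rw [div_div, show (2:ℝ)*(4*t) = 8*t by ring, div_eq_mul_inv, mul_inv,
                ← mul_assoc, ← div_eq_mul_inv]
              simp [div_eq_mul_inv]
            have : 0 ≤ (c/2) * t := by positivity
            rw [← h2]; linarith
          · exact (Real.exp_pos _).le
          · exact hC0

/-- Generalized integral. -/
noncomputable def KK (k : ℕ) (ν z : ℝ) : ℝ :=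
  ∫ t in Ioi (0:ℝ), (t + 1/(4*t)) ^ k * (t ^ (ν - 1) * Real.exp (-z * t - z / (4 * t)))

lemma besselK_eq (ν z : ℝ) : besselK ν z = 2 ^ (ν - 1) * KK 0 ν z := by
  simp [besselK, KK]

/-- Differentiation under the integral sign. -/
lemma hasDerivAt_KK (k : ℕ) (ν : ℝ) {z : ℝ} (hz : 0 < z) :
    HasDerivAt (KK k ν) (-KK (k+1) ν z) z := by
  have main := hasDerivAt_integral_of_dominated_loc_of_deriv_le
    (μ := volume.restrict (Ioi (0:ℝ))) (x₀ := z)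
    (F := fun x t => (t + 1/(4*t)) ^ k * (t ^ (ν - 1) * Real.exp (-x * t - x / (4 * t))))
    (F' := fun x t => -((t + 1/(4*t)) ^ (k+1) * (t ^ (ν - 1) * Real.exp (-x * t - x / (4 * t)))))
    (bound := fun t => (t + 1/(4*t)) ^ (k+1) *
      (t ^ (ν - 1) * Real.exp (-(z/2) * t - (z/2) / (4 * t))))
    (Metric.ball_mem_nhds z (half_pos hz))
    (Eventually.of_forall fun x => meas_aux k (ν - 1) x)
    (integrable_aux k (ν - 1) hz)
    ((meas_aux (k+1) (ν - 1) z).neg)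
    ?_ (integrable_aux (k+1) (ν - 1) (half_pos hz)) ?_
  · have heq : (∫ t in Ioi (0:ℝ),
        -((t + 1/(4*t)) ^ (k+1) * (t ^ (ν - 1) * Real.exp (-z * t - z / (4 * t)))))
        = -KK (k+1) ν z := by
      rw [integral_neg]; rfl
    rw [heq] at main
    exact main.2
  · rw [ae_restrict_iff' measurableSet_Ioi]
    refine ae_of_all _ fun t ht x hx => ?_
    have ht0 : (0:ℝ) < t := ht
    have hxz : z/2 ≤ x := by
      rw [Metric.mem_ball, Real.dist_eq, abs_sub_lt_iff] at hx
      linarith [hx.2]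
    have hs : (0:ℝ) ≤ t + 1/(4*t) := by positivity
    have htp : (0:ℝ) < t ^ (ν - 1) := Real.rpow_pos_of_pos ht0 _
    rw [norm_neg, Real.norm_eq_abs, abs_of_nonneg (by positivity)]
    apply mul_le_mul_of_nonneg_left _ (by positivity)
    apply mul_le_mul_of_nonneg_left _ htp.le
    apply Real.exp_le_exp.2
    have e1 : (z/2) * t ≤ x * t := by
      apply mul_le_mul_of_nonneg_right hxz ht0.le
    have h4t : (0:ℝ) < 4 * t := by positivity
    have e2 : (z/2) / (4 * t) ≤ x / (4 * t) := by gcongr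
    linarith
  · rw [ae_restrict_iff' measurableSet_Ioi]
    refine ae_of_all _ fun t ht x hx => ?_
    have ht0 : (0:ℝ) < t := ht
    have base : HasDerivAt (fun y : ℝ => (t + 1/(4*t)) ^ k *
        (t ^ (ν - 1) * Real.exp (y * (-t - 1/(4*t)))))
        ((t + 1/(4*t)) ^ k * (t ^ (ν - 1) *
          (Real.exp (x * (-t - 1/(4*t))) * (-t - 1/(4*t))))) x := by
      exact (((hasDerivAt_id x).mul_const (-t - 1/(4*t))).exp.const_mul
        (t ^ (ν - 1))).const_mul ((t + 1/(4*t)) ^ k) |>.congr_deriv (by simp only [id_eq]; ring)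
    have hfun : (fun y : ℝ => (t + 1/(4*t)) ^ k *
        (t ^ (ν - 1) * Real.exp (-y * t - y / (4 * t))))
        = fun y : ℝ => (t + 1/(4*t)) ^ k * (t ^ (ν - 1) * Real.exp (y * (-t - 1/(4*t)))) := by
      funext y
      rw [show -y * t - y / (4 * t) = y * (-t - 1/(4*t)) by field_simp]
    rw [hfun]
    refine base.congr_deriv ?_
    rw [show x * (-t - 1/(4*t)) = -x * t - x / (4 * t) by field_simp]
    ring

/-- Antiderivative for the Bessel ODE identity. -/
noncomputable def HH (ν z t : ℝ) : ℝ :=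
  Real.exp (-(z * t) - z/4 * t⁻¹) *
    ((-z) * t ^ (ν + 1) - ν * t ^ ν + z/4 * t ^ (ν - 1))

lemma hasDerivAt_HH (ν : ℝ) {z t : ℝ} (hz : 0 < z) (ht : 0 < t) :
    HasDerivAt (HH ν z)
      ((z^2 * (t + 1/(4*t))^2 - z * (t + 1/(4*t)) - (z^2 + ν^2)) *
        (t ^ (ν - 1) * Real.exp (-z * t - z / (4 * t)))) t := by
  have htne : t ≠ 0 := ht.ne'
  have hexp : HasDerivAt (fun t : ℝ => Real.exp (-(z * t) - z/4 * t⁻¹))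
      (Real.exp (-(z * t) - z/4 * t⁻¹) * (-(z * 1) - z/4 * (-(t^2)⁻¹))) t :=
    ((((hasDerivAt_id t).const_mul z).neg).sub ((hasDerivAt_inv htne).const_mul (z/4))).exp
  have p1 : HasDerivAt (fun t : ℝ => t ^ (ν + 1)) ((ν + 1) * t ^ (ν + 1 - 1)) t :=
    Real.hasDerivAt_rpow_const (Or.inl htne)
  have p2 : HasDerivAt (fun t : ℝ => t ^ ν) (ν * t ^ (ν - 1)) t :=
    Real.hasDerivAt_rpow_const (Or.inl htne)
  have p3 : HasDerivAt (fun t : ℝ => t ^ (ν - 1)) ((ν - 1) * t ^ (ν - 1 - 1)) t :=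
    Real.hasDerivAt_rpow_const (Or.inl htne)
  have hpoly : HasDerivAt (fun t : ℝ => (-z) * t ^ (ν + 1) - ν * t ^ ν + z/4 * t ^ (ν - 1))
      ((-z) * ((ν + 1) * t ^ (ν + 1 - 1)) - ν * (ν * t ^ (ν - 1)) +
        z/4 * ((ν - 1) * t ^ (ν - 1 - 1))) t :=
    ((p1.const_mul (-z)).sub (p2.const_mul ν)).add (p3.const_mul (z/4))
  have hprod := hexp.mul hpoly
  unfold HH
  refine hprod.congr_deriv ?_
  have e1 : -(z * t) - z/4 * t⁻¹ = -z * t - z / (4 * t) := by field_simp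
  have h2 : t ^ ν = t ^ (ν - 1) * t := by
    rw [← Real.rpow_add_one htne]; congr 1; ring
  have h3 : t ^ (ν + 1) = t ^ (ν - 1) * t ^ 2 := by
    rw [show ν + 1 = (ν - 1) + 2 by ring, Real.rpow_add ht, Real.rpow_two]
  have h4 : t ^ (ν + 1 - 1) = t ^ (ν - 1) * t := by
    rw [show ν + 1 - 1 = ν by ring]; exact h2
  have h5 : t ^ (ν - 1 - 1) = t ^ (ν - 1) * t⁻¹ := by
    rw [show ν - 1 - 1 = (ν - 1) + (-1) by ring, Real.rpow_add ht, Real.rpow_neg_one]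
  rw [e1, h2, h3, h4, h5]
  field_simp
  ring

/-- The main integral identity: the ODE combination integrates to zero. -/
lemma key_integral (ν : ℝ) {z : ℝ} (hz : 0 < z) :
    (∫ t in Ioi (0:ℝ), (z^2 * (t + 1/(4*t))^2 - z * (t + 1/(4*t)) - (z^2 + ν^2)) *
      (t ^ (ν - 1) * Real.exp (-z * t - z / (4 * t)))) = 0 := by
  set f' : ℝ → ℝ := fun t => (z^2 * (t + 1/(4*t))^2 - z * (t + 1/(4*t)) - (z^2 + ν^2)) *
    (t ^ (ν - 1) * Real.exp (-z * t - z / (4 * t))) with hf'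
  have hint : IntegrableOn f' (Ioi 0) := by
    have : f' = fun t => z^2 * ((t + 1/(4*t))^2 * (t ^ (ν - 1) * Real.exp (-z * t - z / (4 * t))))
        - z * ((t + 1/(4*t))^1 * (t ^ (ν - 1) * Real.exp (-z * t - z / (4 * t))))
        - (z^2 + ν^2) * ((t + 1/(4*t))^0 * (t ^ (ν - 1) * Real.exp (-z * t - z / (4 * t)))) := by
      funext t; simp only [hf', pow_one, pow_zero, one_mul]; ring
    rw [this]
    exact (((integrable_aux 2 (ν-1) hz).const_mul _).sub
      ((integrable_aux 1 (ν-1) hz).const_mul _)).sub ((integrable_aux 0 (ν-1) hz).const_mul _)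
  have hHHeq : HH ν z = fun t : ℝ =>
      (-z) * (t ^ (ν + 1) * Real.exp (-z * t - z / (4 * t)))
      - ν * (t ^ ν * Real.exp (-z * t - z / (4 * t)))
      + z/4 * (t ^ (ν - 1) * Real.exp (-z * t - z / (4 * t))) := by
    funext t
    unfold HH
    rw [show -(z * t) - z/4 * t⁻¹ = -z * t - z / (4 * t) by
      rcases eq_or_ne t 0 with rfl | htne
      · simp
      · field_simp]
    ring
  have hTop : Tendsto (HH ν z) atTop (𝓝 0) := by
    rw [hHHeq]
    have := (((tendsto_top_aux (ν+1) hz).const_mul (-z)).sub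
      ((tendsto_top_aux ν hz).const_mul ν)).add ((tendsto_top_aux (ν-1) hz).const_mul (z/4))
    simpa using this
  have h0 : Tendsto (HH ν z) (𝓝[>] 0) (𝓝 0) := by
    rw [hHHeq]
    have := (((tendsto_zero_aux (ν+1) hz).const_mul (-z)).sub
      ((tendsto_zero_aux ν hz).const_mul ν)).add ((tendsto_zero_aux (ν-1) hz).const_mul (z/4))
    simpa using this
  set a : ℕ → ℝ := fun n => 1 / (n + 1) with ha
  have ha_pos : ∀ n, 0 < a n := fun n => by positivity
  have hmono : Monotone fun n => Ioi (a n) := by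
    intro m n hmn
    apply Ioi_subset_Ioi
    apply one_div_le_one_div_of_le (by positivity)
    exact_mod_cast Nat.add_le_add_right hmn 1
  have hunion : (⋃ n, Ioi (a n)) = Ioi (0:ℝ) := by
    ext x
    simp only [mem_iUnion, mem_Ioi]
    constructor
    · rintro ⟨n, hn⟩; exact (ha_pos n).trans hn
    · intro hx
      obtain ⟨n, hn⟩ := exists_nat_one_div_lt hx
      exact ⟨n, hn⟩
  have h1 : Tendsto (fun n => ∫ t in Ioi (a n), f' t) atTop (𝓝 (∫ t in Ioi (0:ℝ), f' t)) := by
    have := tendsto_setIntegral_of_monotone (μ := volume) (f := f')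
      (fun n => measurableSet_Ioi) hmono (by rw [hunion]; exact hint)
    rwa [hunion] at this
  have h2 : ∀ n, (∫ t in Ioi (a n), f' t) = 0 - HH ν z (a n) := by
    intro n
    apply integral_Ioi_of_hasDerivAt_of_tendsto'
      (fun x hx => hasDerivAt_HH ν hz ((ha_pos n).trans_le hx)) _ hTop
    exact hint.mono_set (Ioi_subset_Ioi (ha_pos n).le)
  have h3 : Tendsto (fun n => 0 - HH ν z (a n)) atTop (𝓝 0) := by
    have haz : Tendsto a atTop (𝓝[>] (0:ℝ)) := by
      apply tendsto_nhdsWithin_of_tendsto_nhds_of_eventually_within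
      · exact tendsto_one_div_add_atTop_nhds_zero_nat
      · exact Eventually.of_forall fun n => ha_pos n
    simpa using (h0.comp haz).const_sub 0
  have := tendsto_nhds_unique h1 (Tendsto.congr (fun n => (h2 n).symm) h3)
  exact this

end BesselODE

open BesselODE in
theorem stmt5 (ν z : ℝ) (hz : 0 < z) :
    z ^ 2 * deriv (deriv (besselK ν)) z + z * deriv (besselK ν) z
      - (z ^ 2 + ν ^ 2) * besselK ν z = 0 := by
  have hbk : besselK ν = fun x => 2 ^ (ν - 1) * KK 0 ν x := by
    funext x; exact besselK_eq ν x
  have hKd : ∀ x : ℝ, 0 < x → HasDerivAt (besselK ν) (2 ^ (ν - 1) * -KK 1 ν x) x := by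
    intro x hx
    rw [hbk]
    exact (hasDerivAt_KK 0 ν hx).const_mul _
  have hd1 : deriv (besselK ν) z = 2 ^ (ν - 1) * -KK 1 ν z := (hKd z hz).deriv
  have heq : deriv (besselK ν) =ᶠ[𝓝 z] fun x => 2 ^ (ν - 1) * -KK 1 ν x := by
    filter_upwards [isOpen_Ioi.mem_nhds hz] with x hx
    exact (hKd x hx).deriv
  have hd2 : deriv (deriv (besselK ν)) z = 2 ^ (ν - 1) * KK 2 ν z := by
    rw [heq.deriv_eq]
    have : HasDerivAt (fun x => 2 ^ (ν - 1) * -KK 1 ν x)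
        (2 ^ (ν - 1) * KK 2 ν z) z := by
      have h := ((hasDerivAt_KK 1 ν hz).neg).const_mul (2 ^ (ν - 1) : ℝ)
      simpa using h
    exact this.deriv
  have hcomb : z^2 * KK 2 ν z - z * KK 1 ν z - (z^2 + ν^2) * KK 0 ν z = 0 := by
    have e2 : z^2 * KK 2 ν z = ∫ t in Ioi (0:ℝ),
        z^2 * ((t + 1/(4*t))^2 * (t ^ (ν - 1) * Real.exp (-z * t - z / (4 * t)))) := by
      rw [KK, ← integral_const_mul]
    have e1 : z * KK 1 ν z = ∫ t in Ioi (0:ℝ),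
        z * ((t + 1/(4*t))^1 * (t ^ (ν - 1) * Real.exp (-z * t - z / (4 * t)))) := by
      rw [KK, ← integral_const_mul]
    have e0 : (z^2 + ν^2) * KK 0 ν z = ∫ t in Ioi (0:ℝ),
        (z^2 + ν^2) * ((t + 1/(4*t))^0 * (t ^ (ν - 1) * Real.exp (-z * t - z / (4 * t)))) := by
      rw [KK, ← integral_const_mul]
    have hA := (integrable_aux 2 (ν-1) hz).const_mul (z^2)
    have hB := (integrable_aux 1 (ν-1) hz).const_mul z
    have hC := (integrable_aux 0 (ν-1) hz).const_mul (z^2 + ν^2)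
    have t1 : (∫ t in Ioi (0:ℝ),
        (z^2 * ((t + 1/(4*t))^2 * (t ^ (ν - 1) * Real.exp (-z * t - z / (4 * t))))
          - z * ((t + 1/(4*t))^1 * (t ^ (ν - 1) * Real.exp (-z * t - z / (4 * t))))))
        = (∫ t in Ioi (0:ℝ),
            z^2 * ((t + 1/(4*t))^2 * (t ^ (ν - 1) * Real.exp (-z * t - z / (4 * t)))))
          - ∫ t in Ioi (0:ℝ),
            z * ((t + 1/(4*t))^1 * (t ^ (ν - 1) * Real.exp (-z * t - z / (4 * t)))) :=
      integral_sub hA hB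
    have t2 : (∫ t in Ioi (0:ℝ),
        ((z^2 * ((t + 1/(4*t))^2 * (t ^ (ν - 1) * Real.exp (-z * t - z / (4 * t))))
          - z * ((t + 1/(4*t))^1 * (t ^ (ν - 1) * Real.exp (-z * t - z / (4 * t)))))
          - (z^2 + ν^2) * ((t + 1/(4*t))^0 * (t ^ (ν - 1) * Real.exp (-z * t - z / (4 * t))))))
        = (∫ t in Ioi (0:ℝ),
            (z^2 * ((t + 1/(4*t))^2 * (t ^ (ν - 1) * Real.exp (-z * t - z / (4 * t))))
              - z * ((t + 1/(4*t))^1 * (t ^ (ν - 1) * Real.exp (-z * t - z / (4 * t))))))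
          - ∫ t in Ioi (0:ℝ),
            (z^2 + ν^2) * ((t + 1/(4*t))^0 * (t ^ (ν - 1) * Real.exp (-z * t - z / (4 * t)))) :=
      integral_sub (hA.sub hB) hC
    rw [e2, e1, e0, ← t1, ← t2]
    refine Eq.trans ?_ (key_integral ν hz)
    apply setIntegral_congr_fun measurableSet_Ioi
    intro t ht
    simp only [pow_one, pow_zero, one_mul]
    ring
  rw [hd1, hd2, besselK_eq]
  linear_combination (2:ℝ) ^ (ν - 1) * hcomb
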